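/- Assume hypothesis (H1) holds and p⁻ = q⁺ + 1. Then there exists λ* > 0 such that for every λ ∈ (0, λ*) the functional J_λ is coercive, i.e. J_λ(u) → +∞ as ‖u‖ → ∞. -/

import Mathlib

/-- The norm ‖u‖ = (Σ_{k=1}^{T+1} |Δu(k−1)|²)^{1/2} on H. -/
noncomputable def normH (T : ℕ) (u : ℕ → ℝ) : ℝ :=
  Real.sqrt (∑ k ∈ Finset.Icc 1 (T + 1), |u k - u (k - 1)| ^ 2)

/-- F(k,t) = ∫₀ᵗ f(k,τ) dτ. -/
noncomputable def Fint (f : ℕ → ℝ → ℝ) (k : ℕ) (t : ℝ) : ℝ :=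
  ∫ τ in (0:ℝ)..t, f k τ

/-- The functional J_λ(u) = Σ_{k=1}^{T+1} (1/p(k−1))|Δu(k−1)|^{p(k−1)} − λ Σ_{k=1}^{T} F(k,u(k)). -/
noncomputable def Jlam (T : ℕ) (p : ℕ → ℝ) (f : ℕ → ℝ → ℝ) (lam : ℝ) (u : ℕ → ℝ) : ℝ :=
  (∑ k ∈ Finset.Icc 1 (T + 1), (1 / p (k - 1)) * |u k - u (k - 1)| ^ p (k - 1))
    - lam * ∑ k ∈ Finset.Icc 1 T, Fint f k (u k)

set_option maxHeartbeats 1000000 in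
theorem stmt5 (T : ℕ) (hT : 1 ≤ T) (p : ℕ → ℝ) (hp : ∀ k ≤ T + 1, 1 < p k)
    (q : ℕ → ℝ) (hq : ∀ k, 1 ≤ k → k ≤ T → 0 < q k)
    (pm : ℝ) (hpm : IsLeast (p '' Set.Icc 0 (T + 1)) pm)
    (qp : ℝ) (hqp : IsGreatest (q '' Set.Icc 1 T) qp)
    (f : ℕ → ℝ → ℝ) (hf : ∀ k, 1 ≤ k → k ≤ T → Continuous (f k))
    -- Hypothesis (H1)
    (a b : ℕ → ℝ) (ha : ∀ k, 1 ≤ k → k ≤ T → 0 < a k)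
    (hH1 : ∀ k, 1 ≤ k → k ≤ T → ∀ t : ℝ, |f k t| ≤ a k * |t| ^ q k + b k)
    (hpq : pm = qp + 1) :
    ∃ lamStar > (0:ℝ), ∀ lam : ℝ, 0 < lam → lam < lamStar →
      ∀ M : ℝ, ∃ R : ℝ, ∀ u : ℕ → ℝ, u 0 = 0 → u (T + 1) = 0 →
        R < normH T u → M ≤ Jlam T p f lam u := by
  have hT1 : (0:ℝ) < (T:ℝ) + 1 := by positivity
  set s : ℝ := Real.sqrt ((T:ℝ) + 1) with hs_def
  have hs_pos : 0 < s := Real.sqrt_pos.mpr hT1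
  have hs_one : 1 ≤ s := by
    rw [hs_def, show (1:ℝ) = Real.sqrt 1 by simp]
    exact Real.sqrt_le_sqrt (by norm_num)
  have hs_sq : s ^ 2 = (T:ℝ) + 1 := Real.sq_sqrt hT1.le
  set C : ℝ := (T:ℝ) + 1 with hC_def
  have hC_pos : 0 < C := hT1
  have hC_one : 1 ≤ C := by
    have : (0:ℝ) ≤ (T:ℝ) := Nat.cast_nonneg T
    linarith
  set P : ℝ := ∑ k ∈ Finset.Icc 0 (T + 1), p k with hP_def
  have hP_ge : ∀ k ≤ T + 1, p k ≤ P := by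
    intro k hk
    exact Finset.single_le_sum (fun j hj => le_of_lt (lt_trans one_pos
      (hp j (Finset.mem_Icc.mp hj).2))) (Finset.mem_Icc.mpr ⟨Nat.zero_le _, hk⟩)
  have hP_pos : 0 < P :=
    lt_of_lt_of_le (lt_trans one_pos (hp 0 (Nat.zero_le _))) (hP_ge 0 (Nat.zero_le _))
  set A : ℝ := ∑ k ∈ Finset.Icc 1 T, a k with hA_def
  have hA_pos : 0 < A := by
    refine Finset.sum_pos (fun k hk => ha k (Finset.mem_Icc.mp hk).1 (Finset.mem_Icc.mp hk).2)
      ⟨1, Finset.mem_Icc.mpr ⟨le_refl 1, hT⟩⟩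
  set B : ℝ := ∑ k ∈ Finset.Icc 1 T, |b k| with hB_def
  have hB_nonneg : 0 ≤ B := Finset.sum_nonneg fun k _ => abs_nonneg _
  have hpm_le : ∀ k ≤ T + 1, pm ≤ p k := fun k hk => hpm.2 ⟨k, ⟨Nat.zero_le _, hk⟩, rfl⟩
  have hqp_ge : ∀ k, 1 ≤ k → k ≤ T → q k ≤ qp := fun k h1 h2 => hqp.2 ⟨k, ⟨h1, h2⟩, rfl⟩
  have hqp_pos : 0 < qp := by
    obtain ⟨k, hk, hqk⟩ := hqp.1
    exact hqk ▸ hq k hk.1 hk.2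
  have hpm1 : 0 < pm - 1 := by rw [hpq]; linarith
  have hsp : 0 < s ^ pm := Real.rpow_pos_of_pos hs_pos pm
  have hCp : 0 < C ^ pm := Real.rpow_pos_of_pos hC_pos pm
  set ε : ℝ := 1 / (2 * P * s ^ pm) with hε_def
  have hε_pos : 0 < ε := by positivity
  refine ⟨1 / (2 * P * s ^ pm * A * C ^ pm), by positivity, ?_⟩
  set lamStar : ℝ := 1 / (2 * P * s ^ pm * A * C ^ pm) with hls_def
  intro lam hlam0 hlamlt M
  set D : ℝ := lamStar * B * C with hD_def
  have hls_pos : 0 < lamStar := by rw [hls_def]; positivity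
  have hD_nonneg : 0 ≤ D := by
    rw [hD_def]; positivity
  set K : ℝ := (D + max M 0) / ε with hK_def
  have hK_nonneg : 0 ≤ K := by
    have := le_max_right M 0
    rw [hK_def]
    apply div_nonneg (by linarith) hε_pos.le
  refine ⟨max s (K ^ (1 / (pm - 1))), ?_⟩
  intro u hu0 huT1 hR
  set n := normH T u with hn_def
  have hn_nonneg : 0 ≤ n := Real.sqrt_nonneg _
  have hns : s ≤ n := le_of_lt (lt_of_le_of_lt (le_max_left _ _) hR)
  have hn1 : 1 ≤ n := le_trans hs_one hns
  have hn_pos : 0 < n := lt_of_lt_of_le one_pos hn1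
  have hnK : K ^ (1 / (pm - 1)) ≤ n := le_of_lt (lt_of_le_of_lt (le_max_right _ _) hR)
  have hsum_sq : ∑ k ∈ Finset.Icc 1 (T + 1), |u k - u (k - 1)| ^ 2 = n ^ 2 := by
    rw [hn_def, normH, Real.sq_sqrt (Finset.sum_nonneg fun k _ => sq_nonneg _)]
  -- each difference is at most n
  have hΔ_le : ∀ k ∈ Finset.Icc 1 (T + 1), |u k - u (k - 1)| ≤ n := by
    intro k hk
    have h1 : |u k - u (k - 1)| ^ 2 ≤ n ^ 2 := by
      rw [← hsum_sq]
      exact Finset.single_le_sum (f := fun j => |u j - u (j - 1)| ^ 2) (fun j _ => sq_nonneg _) hk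
    have := Real.sqrt_le_sqrt h1
    rwa [Real.sqrt_sq (abs_nonneg _), Real.sqrt_sq hn_nonneg] at this
  -- sup bound on u
  have hu_le : ∀ k, k ≤ T + 1 → |u k| ≤ C * n := by
    intro k hk
    have hrepr : u k = ∑ i ∈ Finset.range k, (u (i + 1) - u i) := by
      rw [Finset.sum_range_sub u k, hu0, sub_zero]
    rw [hrepr]
    calc |∑ i ∈ Finset.range k, (u (i + 1) - u i)|
        ≤ ∑ i ∈ Finset.range k, |u (i + 1) - u i| := Finset.abs_sum_le_sum_abs _ _
      _ ≤ ∑ _i ∈ Finset.range k, n := by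
          refine Finset.sum_le_sum fun i hi => ?_
          have hi' : i < k := Finset.mem_range.mp hi
          have := hΔ_le (i + 1) (Finset.mem_Icc.mpr ⟨by omega, by omega⟩)
          simpa using this
      _ = (k : ℝ) * n := by simp [Finset.sum_const, nsmul_eq_mul]
      _ ≤ C * n := by
          apply mul_le_mul_of_nonneg_right _ hn_nonneg
          rw [hC_def]
          exact_mod_cast Nat.cast_le.mpr hk |>.trans (by push_cast; linarith)
  -- existence of a large difference
  obtain ⟨k0, hk0mem, hk0⟩ :
      ∃ k0 ∈ Finset.Icc 1 (T + 1), n ^ 2 / ((T:ℝ) + 1) ≤ |u k0 - u (k0 - 1)| ^ 2 := by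
    apply Finset.exists_le_of_sum_le ⟨1, Finset.mem_Icc.mpr ⟨le_refl 1, by omega⟩⟩
    rw [hsum_sq, Finset.sum_const, Nat.card_Icc]
    have hcard : (T + 1 + 1 - 1) = T + 1 := by omega
    rw [hcard, nsmul_eq_mul]
    push_cast
    rw [mul_div_cancel₀ _ (ne_of_gt hT1)]
  have hk0T : k0 - 1 ≤ T + 1 := by
    have := (Finset.mem_Icc.mp hk0mem).2; omega
  have hm : n / s ≤ |u k0 - u (k0 - 1)| := by
    have h2 : (n / s) ^ 2 ≤ |u k0 - u (k0 - 1)| ^ 2 := by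
      rw [div_pow, hs_sq]
      exact hk0
    have hns0 : 0 ≤ n / s := div_nonneg hn_nonneg hs_pos.le
    have := Real.sqrt_le_sqrt h2
    rwa [Real.sqrt_sq hns0, Real.sqrt_sq (abs_nonneg _)] at this
  have hm1 : 1 ≤ n / s := (one_le_div hs_pos).mpr hns
  -- lower bound for the first sum
  have hS1 : (1 / P) * (n / s) ^ pm
      ≤ ∑ k ∈ Finset.Icc 1 (T + 1), (1 / p (k - 1)) * |u k - u (k - 1)| ^ p (k - 1) := by
    have hpk0 : 1 < p (k0 - 1) := hp _ hk0T
    have step : (1 / P) * (n / s) ^ pm ≤ (1 / p (k0 - 1)) * |u k0 - u (k0 - 1)| ^ p (k0 - 1) := by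
      have h1 : (n / s) ^ pm ≤ |u k0 - u (k0 - 1)| ^ p (k0 - 1) :=
        calc (n / s) ^ pm ≤ (n / s) ^ p (k0 - 1) :=
              Real.rpow_le_rpow_of_exponent_le hm1 (hpm_le _ hk0T)
          _ ≤ |u k0 - u (k0 - 1)| ^ p (k0 - 1) :=
              Real.rpow_le_rpow (by positivity) hm (by linarith)
      have h2 : 1 / P ≤ 1 / p (k0 - 1) :=
        one_div_le_one_div_of_le (by linarith) (hP_ge _ hk0T)
      exact mul_le_mul h2 h1 (Real.rpow_nonneg (by positivity) _)
        (div_nonneg zero_le_one (by linarith))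
    refine le_trans step (Finset.single_le_sum (f := fun k => (1 / p (k - 1)) * |u k - u (k - 1)| ^ p (k - 1)) (fun j hj => ?_) hk0mem)
    have hpj : 1 < p (j - 1) := hp _ (by have := (Finset.mem_Icc.mp hj).2; omega)
    exact mul_nonneg (div_nonneg zero_le_one (by linarith)) (Real.rpow_nonneg (abs_nonneg _) _)
  -- upper bound for F
  have hCn1 : 1 ≤ C * n := le_trans hC_one (le_mul_of_one_le_right hC_pos.le hn1)
  have hCn_pos : 0 < C * n := lt_of_lt_of_le one_pos hCn1
  have hF : ∀ k, 1 ≤ k → k ≤ T →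
      |Fint f k (u k)| ≤ a k * (C ^ pm * n ^ pm) + |b k| * (C * n) := by
    intro k h1 h2
    have huk : |u k| ≤ C * n := hu_le k (by omega)
    have hbound : ∀ x ∈ Set.uIoc (0:ℝ) (u k), ‖f k x‖ ≤ a k * (C * n) ^ q k + |b k| := by
      intro x hx
      have hx' : |x| ≤ |u k| := by
        rw [Set.uIoc] at hx
        rcases hx with ⟨hx1, hx2⟩
        rw [abs_le]
        constructor
        · calc -|u k| ≤ min 0 (u k) := le_min (neg_nonpos_of_nonneg (abs_nonneg _))
                (neg_abs_le _)
            _ ≤ x := le_of_lt hx1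
        · exact hx2.trans (max_le (abs_nonneg _) (le_abs_self _))
      calc ‖f k x‖ = |f k x| := rfl
        _ ≤ a k * |x| ^ q k + b k := hH1 k h1 h2 x
        _ ≤ a k * (C * n) ^ q k + |b k| := by
            have h3 : |x| ^ q k ≤ (C * n) ^ q k :=
              Real.rpow_le_rpow (abs_nonneg _) (hx'.trans huk) (hq k h1 h2).le
            have h4 := le_abs_self (b k)
            exact add_le_add (mul_le_mul_of_nonneg_left h3 (ha k h1 h2).le) h4
    have hInt := intervalIntegral.norm_integral_le_of_norm_le_const hbound
    calc |Fint f k (u k)| ≤ (a k * (C * n) ^ q k + |b k|) * |u k - 0| := hInt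
      _ = (a k * (C * n) ^ q k + |b k|) * |u k| := by rw [sub_zero]
      _ ≤ (a k * (C * n) ^ q k + |b k|) * (C * n) := by
          apply mul_le_mul_of_nonneg_left huk
          exact add_nonneg (mul_nonneg (ha k h1 h2).le (Real.rpow_nonneg hCn_pos.le _))
            (abs_nonneg _)
      _ = a k * ((C * n) ^ q k * (C * n)) + |b k| * (C * n) := by ring
      _ ≤ a k * ((C * n) ^ qp * (C * n)) + |b k| * (C * n) := by
          have h5 : (C * n) ^ q k ≤ (C * n) ^ qp :=
            Real.rpow_le_rpow_of_exponent_le hCn1 (hqp_ge k h1 h2)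
          exact add_le_add_left (mul_le_mul_of_nonneg_left
            (mul_le_mul_of_nonneg_right h5 hCn_pos.le) (ha k h1 h2).le) _
      _ = a k * (C * n) ^ (qp + 1) + |b k| * (C * n) := by
          rw [Real.rpow_add_one (ne_of_gt hCn_pos)]
      _ = a k * (C ^ pm * n ^ pm) + |b k| * (C * n) := by
          rw [hpq, Real.mul_rpow hC_pos.le hn_nonneg]
  -- upper bound for the second sum
  have hS2 : ∑ k ∈ Finset.Icc 1 T, Fint f k (u k)
      ≤ A * (C ^ pm * n ^ pm) + B * (C * n) := by
    calc ∑ k ∈ Finset.Icc 1 T, Fint f k (u k)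
        ≤ ∑ k ∈ Finset.Icc 1 T, |Fint f k (u k)| :=
          Finset.sum_le_sum fun k _ => le_abs_self _
      _ ≤ ∑ k ∈ Finset.Icc 1 T, (a k * (C ^ pm * n ^ pm) + |b k| * (C * n)) :=
          Finset.sum_le_sum fun k hk =>
            hF k (Finset.mem_Icc.mp hk).1 (Finset.mem_Icc.mp hk).2
      _ = A * (C ^ pm * n ^ pm) + B * (C * n) := by
          rw [Finset.sum_add_distrib, ← Finset.sum_mul, ← Finset.sum_mul, hA_def, hB_def]
  -- key coefficient computations
  have hnpm_nonneg : 0 ≤ n ^ pm := Real.rpow_nonneg hn_nonneg _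
  have hcoef1 : lam * (A * C ^ pm) ≤ ε := by
    have h1 : lam * (A * C ^ pm) ≤ lamStar * (A * C ^ pm) :=
      mul_le_mul_of_nonneg_right hlamlt.le (by positivity)
    have h2 : lamStar * (A * C ^ pm) = ε := by
      rw [hls_def, hε_def]
      field_simp
    linarith
  have hcoef2 : lam * (B * C) ≤ D := by
    rw [hD_def]
    calc lam * (B * C) ≤ lamStar * (B * C) :=
        mul_le_mul_of_nonneg_right hlamlt.le (by positivity)
      _ = lamStar * B * C := by ring
  -- main chain
  have hdiv : (n / s) ^ pm = n ^ pm / s ^ pm := Real.div_rpow hn_nonneg hs_pos.le pm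
  have hkey : ε * n ^ pm - D * n ≤ Jlam T p f lam u := by
    rw [Jlam]
    have hL : (1 / P) * (n / s) ^ pm = 2 * ε * n ^ pm := by
      rw [hdiv, hε_def]
      field_simp
    have hR2 : lam * ∑ k ∈ Finset.Icc 1 T, Fint f k (u k)
        ≤ ε * n ^ pm + D * n := by
      calc lam * ∑ k ∈ Finset.Icc 1 T, Fint f k (u k)
          ≤ lam * (A * (C ^ pm * n ^ pm) + B * (C * n)) :=
            mul_le_mul_of_nonneg_left hS2 hlam0.le
        _ = (lam * (A * C ^ pm)) * n ^ pm + (lam * (B * C)) * n := by ring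
        _ ≤ ε * n ^ pm + D * n := by
            have := mul_le_mul_of_nonneg_right hcoef1 hnpm_nonneg
            have := mul_le_mul_of_nonneg_right hcoef2 hn_nonneg
            linarith
    have := hS1
    rw [hL] at this
    linarith
  -- final arithmetic
  have hKn : K ≤ n ^ (pm - 1) := by
    have h := Real.rpow_le_rpow (Real.rpow_nonneg hK_nonneg _) hnK hpm1.le
    rwa [← Real.rpow_mul hK_nonneg, one_div_mul_cancel (ne_of_gt hpm1),
      Real.rpow_one] at h
  have hεK : ε * K = D + max M 0 := by
    rw [hK_def, mul_div_cancel₀ _ (ne_of_gt hε_pos)]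
  have h2 : D + max M 0 ≤ ε * n ^ (pm - 1) := by
    have := mul_le_mul_of_nonneg_left hKn hε_pos.le
    linarith [hεK ▸ this]
  have h1 : ε * n ^ pm = (ε * n ^ (pm - 1)) * n := by
    rw [mul_assoc, ← Real.rpow_add_one (ne_of_gt hn_pos), sub_add_cancel]
  have hfinal : M ≤ ε * n ^ pm - D * n := by
    have hM0 : (0:ℝ) ≤ max M 0 := le_max_right _ _
    calc M ≤ max M 0 := le_max_left _ _
      _ = 1 * max M 0 := (one_mul _).symm
      _ ≤ n * (ε * n ^ (pm - 1) - D) := by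
          apply mul_le_mul hn1 (by linarith) hM0 hn_nonneg
      _ = (ε * n ^ (pm - 1)) * n - D * n := by ring
      _ = ε * n ^ pm - D * n := by rw [h1]
  linarith
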